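/- Let G and J be locally compact Hausdorff abelian topological groups and M̃ a discrete subgroup of G × J such that π_G restricted to M̃ is injective. If W ⊆ J has compact closure, then ⋏(W) := {π_G(y) : y ∈ M̃, π_J(y) ∈ W} is uniformly discrete in G: there exists an open neighbourhood U of 0 in G such that (x + U) ∩ ⋏(W) = {x} for every x ∈ ⋏(W). -/

import Mathlib

open scoped Pointwise

/-- If `M̃` is a discrete subgroup of `G × J` on which the first projection is injective and
`W ⊆ J` has compact closure, then the projection set
`⋏(W) = {π_G(y) : y ∈ M̃, π_J(y) ∈ W}` is uniformly discrete in `G`. -/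
theorem cutProject_uniformly_discrete {G J : Type*}
    [AddCommGroup G] [TopologicalSpace G] [IsTopologicalAddGroup G] [LocallyCompactSpace G]
    [T2Space G]
    [AddCommGroup J] [TopologicalSpace J] [IsTopologicalAddGroup J] [LocallyCompactSpace J]
    [T2Space J]
    (M : AddSubgroup (G × J)) (hdisc : DiscreteTopology ↥M)
    (hinj : Set.InjOn Prod.fst (M : Set (G × J)))
    (W : Set J) (hW : IsCompact (closure W)) :
    ∃ U : Set G, IsOpen U ∧ (0 : G) ∈ U ∧
      ∀ x ∈ {g : G | ∃ y ∈ M, Prod.fst y = g ∧ Prod.snd y ∈ W},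
        ({x} + U) ∩ {g : G | ∃ y ∈ M, Prod.fst y = g ∧ Prod.snd y ∈ W} = {x} := by
  obtain ⟨C, hCc, hC0⟩ := exists_compact_mem_nhds (0 : G)
  set K : Set J := (fun p : J × J => p.1 - p.2) '' (closure W ×ˢ closure W) with hK
  have hKc : IsCompact K := (hW.prod hW).image (continuous_fst.sub continuous_snd)
  have hMclosed : IsClosed (M : Set (G × J)) := AddSubgroup.isClosed_of_discrete
  set T : Set (G × J) := (M : Set (G × J)) ∩ (C ×ˢ K) with hT
  have hTc : IsCompact T := (hCc.prod hKc).inter_left hMclosed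
  have hTd : DiscreteTopology T := by
    exact DiscreteTopology.of_subset hdisc (Set.inter_subset_left)
  have hTfin : T.Finite := hTc.finite (isDiscrete_iff_discreteTopology.mpr hTd)
  set F : Set G := (Prod.fst '' T) \ {0} with hF
  have hFfin : F.Finite := (hTfin.image _).diff
  refine ⟨interior C ∩ Fᶜ, isOpen_interior.inter hFfin.isClosed.isOpen_compl,
    ⟨mem_interior_iff_mem_nhds.mpr hC0, fun h => h.2 rfl⟩, ?_⟩
  rintro x ⟨y, hyM, hy1, hy2⟩
  apply Set.Subset.antisymm
  · rintro z ⟨⟨x', hx', u, hu, rfl⟩, w, hwM, hw1, hw2⟩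
    rcases Set.mem_singleton_iff.mp hx' with rfl
    have hd : w - y ∈ M := sub_mem hwM hyM
    have hfst : (w - y).1 = u := by simp [hw1, hy1]
    have hu0 : u = 0 := by
      by_contra hne
      refine hu.2 ⟨⟨w - y, ⟨hd, ?_, ?_⟩, hfst⟩, hne⟩
      · show (w - y).1 ∈ C
        rw [hfst]; exact interior_subset hu.1
      · exact ⟨(w.2, y.2), ⟨subset_closure hw2, subset_closure hy2⟩, rfl⟩
    simp [hu0]
  · rintro z rfl
    exact ⟨⟨z, rfl, 0, ⟨mem_interior_iff_mem_nhds.mpr hC0, fun h => h.2 rfl⟩, add_zero z⟩,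
      y, hyM, hy1, hy2⟩
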